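/- Suppose ν ≥ (1/(4(1−μ)))·min{ ‖u²‖₂²/‖u‖₂⁴ , ‖h‖₂²/μ² }. Then 𝔏'(ν,μ,u,h) ≤ 𝔏(ν,μ,u). (This is Proposition 5.3(i): under this lower bound on ν, the spectral-theory Gaussian bound for the first chaos of a stationary linear Hawkes process improves the direct bound.) -/

import Mathlib

open MeasureTheory Real Filter
open scoped ENNReal

/-- The `L^p` norm (with respect to Lebesgue measure on `ℝ`) as a real number. -/
noncomputable def lpNorm (p : ℝ≥0∞) (f : ℝ → ℝ) : ℝ :=
  (eLpNorm f p volume).toReal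

/-- The Gaussian bound `𝔏(ν,μ,u)` of Theorem 5.1 for the first chaos of a stationary
linear Hawkes process. -/
noncomputable def Lbound (ν μ : ℝ) (u : ℝ → ℝ) : ℝ :=
  Real.sqrt (2 / π) * |1 - ν / (1 - μ) * lpNorm 2 u ^ 2|
    + ν / (1 - μ) * lpNorm 3 u ^ 3
    + 2 * Real.sqrt (2 / π) * ν * μ * (2 - μ) / (1 - μ) ^ 2 * lpNorm 2 u ^ 2
    + ν * μ / (1 - μ) ^ 2 * lpNorm 2 u * lpNorm 2 (fun t => u t ^ 2)

/-- The spectral-theory Gaussian bound `𝔏'(ν,μ,u,h)` of Theorem 5.2. -/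
noncomputable def Lbound' (ν μ : ℝ) (u h : ℝ → ℝ) : ℝ :=
  Real.sqrt (2 / π) *
      Real.sqrt ((1 - ν / (1 - μ) * lpNorm 2 u ^ 2) ^ 2
        + ν / (1 - μ) ^ 3 *
            min (μ ^ 2 * lpNorm 2 (fun t => u t ^ 2) ^ 2)
              (lpNorm 2 h ^ 2 * lpNorm 1 (fun t => u t ^ 2) ^ 2))
    + ν / (1 - μ) * lpNorm 3 u ^ 3
    + 2 * Real.sqrt (2 / π) * ν * μ / (1 - μ) ^ 2 * lpNorm 2 u ^ 2
    + ν * μ / (1 - μ) ^ 2 * lpNorm 2 u * lpNorm 2 (fun t => u t ^ 2)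

lemma lpNorm_sq_eq (u : ℝ → ℝ) : lpNorm 1 (fun t => u t ^ 2) = lpNorm 2 u ^ 2 := by
  have h := eLpNorm_norm_rpow (p := 1) (μ := (volume : Measure ℝ)) u two_pos
  simp only [Real.norm_eq_abs, Real.rpow_two, sq_abs, one_mul, ENNReal.ofReal_ofNat] at h
  rw [_root_.lpNorm, _root_.lpNorm, h, ← ENNReal.toReal_rpow]
  norm_num

/-- Proposition 5.3(i): if `ν ≥ (1/(4(1−μ)))·min{‖u²‖₂²/‖u‖₂⁴, ‖h‖₂²/μ²}` then
`𝔏'(ν,μ,u,h) ≤ 𝔏(ν,μ,u)`. Here `h` is the reproduction kernel of a stationary linear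
Hawkes process, viewed as a function on `ℝ` vanishing on `(-∞,0]`, with
`∫₀^∞ h = μ < 1`. -/
theorem prop_5_3_i (ν μ : ℝ) (u h : ℝ → ℝ)
    (hν : 0 < ν) (hμ : μ ∈ Set.Ioo (0 : ℝ) 1)
    (hu1 : MemLp u 1 volume) (hu2 : MemLp u 2 volume)
    (hu3 : MemLp u 3 volume) (hu4 : MemLp u 4 volume)
    (hu0 : ¬ u =ᵐ[volume] 0)
    (hhm : Measurable h) (hh0 : ∀ x, 0 ≤ h x) (hhneg : ∀ x ≤ 0, h x = 0)
    (hh1 : Integrable h volume) (hh2 : MemLp h 2 volume)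
    (hhμ : ∫ x, h x = μ)
    (hcond : ν ≥ 1 / (4 * (1 - μ)) *
      min (lpNorm 2 (fun t => u t ^ 2) ^ 2 / lpNorm 2 u ^ 4)
        (lpNorm 2 h ^ 2 / μ ^ 2)) :
    Lbound' ν μ u h ≤ Lbound ν μ u := by
  obtain ⟨hμ0, hμ1⟩ := hμ
  have h1μ : 0 < 1 - μ := by linarith
  set A := lpNorm 2 u with hAdef
  set B := lpNorm 2 (fun t => u t ^ 2) with hBdef
  set Hn := lpNorm 2 h with hHdef
  have hA : 0 < A := by
    refine ENNReal.toReal_pos (fun h0 => hu0 ?_) hu2.2.ne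
    exact (eLpNorm_eq_zero_iff hu2.1 two_ne_zero).mp h0
  have hBpos : 0 ≤ B := ENNReal.toReal_nonneg
  have hHpos : 0 ≤ Hn := ENNReal.toReal_nonneg
  have hL1 : lpNorm 1 (fun t => u t ^ 2) = A ^ 2 := lpNorm_sq_eq u
  -- the min is bounded
  have hcond' : min (B ^ 2 / A ^ 4) (Hn ^ 2 / μ ^ 2) ≤ 4 * (1 - μ) * ν := by
    have h4 : (0:ℝ) < 4 * (1 - μ) := by linarith
    rw [ge_iff_le, one_div, inv_mul_le_iff₀ h4] at hcond
    linarith [hcond]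
  have hm : min (μ ^ 2 * B ^ 2) (Hn ^ 2 * (A ^ 2) ^ 2) ≤ 4 * ν * (1 - μ) * μ ^ 2 * A ^ 4 := by
    rcases le_total (B ^ 2 / A ^ 4) (Hn ^ 2 / μ ^ 2) with hc | hc
    · rw [min_eq_left hc] at hcond'
      have hB2 : B ^ 2 ≤ 4 * (1 - μ) * ν * A ^ 4 := by
        rw [div_le_iff₀ (by positivity)] at hcond'
        linarith
      calc min (μ ^ 2 * B ^ 2) (Hn ^ 2 * (A ^ 2) ^ 2) ≤ μ ^ 2 * B ^ 2 := min_le_left _ _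
        _ ≤ 4 * ν * (1 - μ) * μ ^ 2 * A ^ 4 := by nlinarith [sq_nonneg μ]
    · rw [min_eq_right hc] at hcond'
      have hH2 : Hn ^ 2 ≤ 4 * (1 - μ) * ν * μ ^ 2 := by
        rw [div_le_iff₀ (by positivity)] at hcond'
        linarith
      calc min (μ ^ 2 * B ^ 2) (Hn ^ 2 * (A ^ 2) ^ 2) ≤ Hn ^ 2 * (A ^ 2) ^ 2 := min_le_right _ _
        _ ≤ 4 * ν * (1 - μ) * μ ^ 2 * A ^ 4 := by nlinarith [pow_pos hA 4]
  set X := 1 - ν / (1 - μ) * A ^ 2 with hXdef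
  set d := 2 * ν * μ * A ^ 2 / (1 - μ) with hddef
  have hd : 0 ≤ d := by positivity
  clear_value A B Hn X d
  have hc : ν / (1 - μ) ^ 3 * min (μ ^ 2 * B ^ 2) (Hn ^ 2 * (A ^ 2) ^ 2) ≤ d ^ 2 := by
    have e : d ^ 2 = ν / (1 - μ) ^ 3 * (4 * ν * (1 - μ) * μ ^ 2 * A ^ 4) := by
      rw [hddef]; field_simp; ring
    rw [e]
    exact mul_le_mul_of_nonneg_left hm (by positivity)
  have hsqrt : Real.sqrt (X ^ 2 + ν / (1 - μ) ^ 3 *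
      min (μ ^ 2 * B ^ 2) (Hn ^ 2 * (A ^ 2) ^ 2)) ≤ |X| + d := by
    have hle : X ^ 2 + ν / (1 - μ) ^ 3 * min (μ ^ 2 * B ^ 2) (Hn ^ 2 * (A ^ 2) ^ 2)
        ≤ (|X| + d) ^ 2 := by
      have expand : (|X| + d) ^ 2 = |X| ^ 2 + 2 * (|X| * d) + d ^ 2 := by ring
      rw [expand]
      have h1 : X ^ 2 = |X| ^ 2 := (sq_abs X).symm
      have h2 : 0 ≤ |X| * d := mul_nonneg (abs_nonneg X) hd
      linarith [hc, h1, h2]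
    calc Real.sqrt _ ≤ Real.sqrt ((|X| + d) ^ 2) := Real.sqrt_le_sqrt hle
      _ = |X| + d := Real.sqrt_sq (by positivity)
  have hS : 0 ≤ Real.sqrt (2 / π) := Real.sqrt_nonneg _
  have key := mul_le_mul_of_nonneg_left hsqrt hS
  have halg : 2 * Real.sqrt (2 / π) * ν * μ * (2 - μ) / (1 - μ) ^ 2 * A ^ 2
      = 2 * Real.sqrt (2 / π) * ν * μ / (1 - μ) ^ 2 * A ^ 2 + Real.sqrt (2 / π) * d := by
    rw [hddef]; field_simp; ring
  rw [Lbound', Lbound, ← hAdef, ← hBdef, ← hHdef, hL1, ← hXdef]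
  rw [mul_add] at key
  linarith [key]
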